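/- Let C be an oriented linear chord diagram of d chords and let 0 ≤ ℓ ≤ 2d. Then ⟨C_+^ℓ⟩ = (−A³)·⟨C⟩, where C_+^ℓ is the diagram of d+1 chords obtained from C by replacing every entry i of a chord by i if i ≤ ℓ and by i+2 if i > ℓ, and adjoining the positive chord (ℓ+1, ℓ+2). -/

import Mathlib

open Equiv LaurentPolynomial Finset

/-- `C` is an oriented linear chord diagram of `d` chords: a set of `d` ordered pairs of
integers whose entries (first and second components together) are exactly `{1, …, 2d}`.
(Together with `C.card = d` this forces all `2d` entries to be pairwise distinct.) -/
def IsOLCD (d : ℕ) (C : Finset (ℤ × ℤ)) : Prop :=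
  C.card = d ∧ (C.image Prod.fst ∪ C.image Prod.snd) = Finset.Icc 1 (2 * (d : ℤ))

/-- The set `R_c` of transpositions of `ℤ` associated to a chord `c = (i, j)` carrying the
label `lbl` (`true` = `A`, `false` = `B`). -/
def Rset (lbl : Bool) (c : ℤ × ℤ) : Set (Equiv.Perm ℤ) :=
  if lbl = decide (c.1 < c.2) then
    {Equiv.swap c.1 (c.2 - 1), Equiv.swap (c.1 - 1) c.2}
  else
    {Equiv.swap c.1 c.2, Equiv.swap (c.1 - 1) (c.2 - 1)}

/-- The subgroup of permutations generated by `⋃_{c ∈ C} R_c`, for a state `s` of `C`. -/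
def stateGroup (C : Finset (ℤ × ℤ)) (s : {c // c ∈ C} → Bool) : Subgroup (Equiv.Perm ℤ) :=
  Subgroup.closure (⋃ c : {c // c ∈ C}, Rset (s c) c.1)

/-- `Γ_s`: the number of orbits of the action of `stateGroup C s` on `{0, 1, …, 2d}`,
counted as the number of distinct orbits of elements of `{0, …, 2d}`. -/
noncomputable def Gamma (d : ℕ) (C : Finset (ℤ × ℤ)) (s : {c // c ∈ C} → Bool) : ℕ :=
  ((fun x : ℤ => MulAction.orbit (stateGroup C s) x) '' Set.Icc (0 : ℤ) (2 * d)).ncard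

/-- `⟨C|s⟩ = A^(|s⁻¹(A)| - |s⁻¹(B)|) * (-A² - A⁻²)^(Γ_s - 1)`. -/
noncomputable def bracketTerm (d : ℕ) (C : Finset (ℤ × ℤ)) (s : {c // c ∈ C} → Bool) :
    LaurentPolynomial ℤ :=
  T (((Finset.univ.filter fun c => s c = true).card : ℤ) -
      ((Finset.univ.filter fun c => s c = false).card : ℤ)) *
    (-T 2 - T (-2)) ^ (Gamma d C s - 1)

/-- The bracket polynomial `⟨C⟩ = Σ_s ⟨C|s⟩`, summing over all `2^d` states of `C`. -/
noncomputable def bracket (d : ℕ) (C : Finset (ℤ × ℤ)) : LaurentPolynomial ℤ :=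
  ∑ s : ({c // c ∈ C} → Bool), bracketTerm d C s

/-- The maximal exponent occurring in a Laurent polynomial (junk value `0` for `f = 0`). -/
noncomputable def maxDeg (f : LaurentPolynomial ℤ) : ℤ := f.coeff.support.max.unbotD 0

/-- The minimal exponent occurring in a Laurent polynomial (junk value `0` for `f = 0`). -/
noncomputable def minDeg (f : LaurentPolynomial ℤ) : ℤ := f.coeff.support.min.untopD 0

/-- The span of a Laurent polynomial: maximal minus minimal exponent. -/
noncomputable def spanL (f : LaurentPolynomial ℤ) : ℤ := maxDeg f - minDeg f



open Relation




section OrbitRel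

variable (S : Set (Equiv.Perm ℤ))

def relOf (x y : ℤ) : Prop := ∃ σ ∈ S, σ x = y

lemma closure_apply_eqvGen {g : Equiv.Perm ℤ} (hg : g ∈ Subgroup.closure S) :
    ∀ x, EqvGen (relOf S) x (g x) := by
  induction hg using Subgroup.closure_induction with
  | mem σ hσ => exact fun x => EqvGen.rel _ _ ⟨σ, hσ, rfl⟩
  | one => exact fun x => EqvGen.refl x
  | mul g h _ _ ihg ihh =>
      intro x
      have h1 := ihh x
      have h2 := ihg (h x)
      simpa using h1.trans _ _ _ h2
  | inv g _ ih =>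
      intro x
      have := ih (g⁻¹ x)
      rw [show g (g⁻¹ x) = x from g.apply_symm_apply x] at this
      exact this.symm _ _

lemma orbit_closure_eq (x : ℤ) :
    MulAction.orbit (Subgroup.closure S) x = {y | EqvGen (relOf S) x y} := by
  ext y
  constructor
  · rintro ⟨⟨g, hg⟩, rfl⟩
    exact closure_apply_eqvGen S hg x
  · intro h
    induction h with
    | rel a b hab =>
        obtain ⟨σ, hσ, rfl⟩ := hab
        exact ⟨⟨σ, Subgroup.subset_closure hσ⟩, rfl⟩
    | refl a => exact MulAction.mem_orbit_self a
    | symm a b _ ih => exact MulAction.mem_orbit_symm.mp ih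
    | trans a b c _ _ ih1 ih2 =>
        obtain ⟨g, rfl⟩ := ih2
        obtain ⟨h, rfl⟩ := ih1
        exact ⟨g * h, mul_smul g h a⟩

end OrbitRel


section Maps

def jmap (ℓ : ℤ) (x : ℤ) : ℤ := if x ≤ ℓ then x else x + 2
def jinv (ℓ : ℤ) (x : ℤ) : ℤ := if x ≤ ℓ then x else x - 2
def fco (ℓ : ℤ) (b : Bool) (x : ℤ) : ℤ :=
  if b then (if x ≤ ℓ + 1 then x else x - 2)
  else (if x ≤ ℓ then x else if x ≤ ℓ + 2 then ℓ else x - 2)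

variable {ℓ : ℤ}

lemma jinv_jmap (x : ℤ) : jinv ℓ (jmap ℓ x) = x := by unfold jmap jinv; split_ifs <;> omega
lemma jmap_ne1 (x : ℤ) : jmap ℓ x ≠ ℓ + 1 := by unfold jmap; split_ifs <;> omega
lemma jmap_ne2 (x : ℤ) : jmap ℓ x ≠ ℓ + 2 := by unfold jmap; split_ifs <;> omega
lemma jmap_sub_one_ne1 (x : ℤ) : jmap ℓ x - 1 ≠ ℓ + 1 := by unfold jmap; split_ifs <;> omega
lemma jmap_lt_iff (x y : ℤ) : jmap ℓ x < jmap ℓ y ↔ x < y := by unfold jmap; split_ifs <;> omega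
lemma fco_jmap (b : Bool) (x : ℤ) : fco ℓ b (jmap ℓ x) = x := by
  unfold fco jmap; cases b <;> simp <;> split_ifs <;> omega
lemma fco_jmap_sub_one (b : Bool) (x : ℤ) : fco ℓ b (jmap ℓ x - 1) = x - 1 := by
  unfold fco jmap; cases b <;> simp <;> split_ifs <;> omega

def shm (ℓ : ℤ) (p : ℤ × ℤ) : ℤ × ℤ := (jmap ℓ p.1, jmap ℓ p.2)
def shinv (ℓ : ℤ) (p : ℤ × ℤ) : ℤ × ℤ := (jinv ℓ p.1, jinv ℓ p.2)

lemma shinv_shm (ℓ : ℤ) (p : ℤ × ℤ) : shinv ℓ (shm ℓ p) = p := by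
  unfold shm shinv; simp [jinv_jmap]

lemma shm_ne_monogon (ℓ : ℤ) (p : ℤ × ℤ) : shm ℓ p ≠ (ℓ + 1, ℓ + 2) := by
  intro h
  exact jmap_ne1 p.1 (congrArg Prod.fst h)

def Cplus (ℓ : ℤ) (C : Finset (ℤ × ℤ)) : Finset (ℤ × ℤ) :=
  insert (ℓ + 1, ℓ + 2) (C.image (shm ℓ))

variable {C : Finset (ℤ × ℤ)}

lemma mem_C_of {c : ℤ × ℤ} (hc : c ∈ Cplus ℓ C) (hne : c ≠ (ℓ + 1, ℓ + 2)) :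
    shinv ℓ c ∈ C ∧ shm ℓ (shinv ℓ c) = c := by
  rcases Finset.mem_insert.mp hc with h | h
  · exact absurd h hne
  · obtain ⟨p, hp, rfl⟩ := Finset.mem_image.mp h
    rw [shinv_shm]
    exact ⟨hp, rfl⟩

lemma monogon_mem : (ℓ + 1, ℓ + 2) ∈ Cplus ℓ C := Finset.mem_insert_self _ _
lemma shm_mem {p : ℤ × ℤ} (hp : p ∈ C) : shm ℓ p ∈ Cplus ℓ C :=
  Finset.mem_insert_of_mem (Finset.mem_image_of_mem _ hp)

/-- the state on `Cplus` induced by a state `s` on `C` and a bool `b` on the monogon. -/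
def Sb (ℓ : ℤ) {C : Finset (ℤ × ℤ)} (s : {c // c ∈ C} → Bool) (b : Bool) :
    {c // c ∈ Cplus ℓ C} → Bool := fun c =>
  if h : c.1 = (ℓ + 1, ℓ + 2) then b else s ⟨shinv ℓ c.1, (mem_C_of c.2 h).1⟩

lemma Sb_monogon (s : {c // c ∈ C} → Bool) (b : Bool) (h : ((ℓ+1, ℓ+2) : ℤ × ℤ) ∈ Cplus ℓ C) :
    Sb ℓ s b ⟨(ℓ + 1, ℓ + 2), h⟩ = b := dif_pos rfl

lemma Sb_shm (s : {c // c ∈ C} → Bool) (b : Bool) {p : ℤ × ℤ} (hp : p ∈ C)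
    (h : shm ℓ p ∈ Cplus ℓ C) : Sb ℓ s b ⟨shm ℓ p, h⟩ = s ⟨p, hp⟩ := by
  have hne : shm ℓ p ≠ (ℓ + 1, ℓ + 2) := shm_ne_monogon ℓ p
  rw [Sb, dif_neg hne]
  congr 1
  exact Subtype.ext (shinv_shm ℓ p)

/-- equivalence of chords -/
def chordEquiv (ℓ : ℤ) (C : Finset (ℤ × ℤ)) : {c // c ∈ Cplus ℓ C} ≃ Option {c // c ∈ C} where
  toFun c := if h : c.1 = (ℓ + 1, ℓ + 2) then none else some ⟨shinv ℓ c.1, (mem_C_of c.2 h).1⟩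
  invFun o := o.elim ⟨(ℓ + 1, ℓ + 2), monogon_mem⟩ (fun c => ⟨shm ℓ c.1, shm_mem c.2⟩)
  left_inv c := by
    beta_reduce
    by_cases h : c.1 = (ℓ + 1, ℓ + 2)
    · rw [dif_pos h]; exact Subtype.ext h.symm
    · rw [dif_neg h]; exact Subtype.ext (mem_C_of c.2 h).2
  right_inv o := by
    cases o with
    | none => exact dif_pos rfl
    | some c =>
        dsimp only [Option.elim]
        rw [dif_neg (shm_ne_monogon ℓ c.1)]
        exact congrArg some (Subtype.ext (shinv_shm ℓ c.1))

lemma Sb_symm_none (s : {c // c ∈ C} → Bool) (b : Bool) :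
    Sb ℓ s b ((chordEquiv ℓ C).symm none) = b := Sb_monogon s b _

lemma Sb_symm_some (s : {c // c ∈ C} → Bool) (b : Bool) (c : {c // c ∈ C}) :
    Sb ℓ s b ((chordEquiv ℓ C).symm (some c)) = s c := by
  have := Sb_shm (ℓ := ℓ) s b c.2 (shm_mem c.2)
  simpa [chordEquiv] using this

end Maps


section Main

lemma eqvgen_swap_step {R : ℤ → ℤ → Prop} {f : ℤ → ℤ} {u v : ℤ}
    (h : EqvGen R (f u) (f v)) (a : ℤ) : EqvGen R (f a) (f (Equiv.swap u v a)) := by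
  rcases eq_or_ne a u with rfl | hu
  · rw [Equiv.swap_apply_left]; exact h
  rcases eq_or_ne a v with rfl | hv
  · rw [Equiv.swap_apply_right]; exact h.symm _ _
  · rw [Equiv.swap_apply_of_ne_of_ne hu hv]; exact EqvGen.refl _

def SGen (C : Finset (ℤ × ℤ)) (s : {c // c ∈ C} → Bool) : Set (Equiv.Perm ℤ) :=
  ⋃ c : {c // c ∈ C}, Rset (s c) c.1

variable {ℓ : ℤ} {C : Finset (ℤ × ℤ)}

lemma mem_SS {s : {c // c ∈ C} → Bool} {σ : Equiv.Perm ℤ} (c : {c // c ∈ C})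
    (h : σ ∈ Rset (s c) c.1) : σ ∈ SGen C s := Set.mem_iUnion.mpr ⟨c, h⟩

lemma Rset_mono_true :
    Rset true ((ℓ + 1 : ℤ), (ℓ + 2 : ℤ)) =
      {Equiv.swap (ℓ + 1) (ℓ + 1), Equiv.swap ℓ (ℓ + 2)} := by
  rw [Rset, if_pos]
  · show ({Equiv.swap (ℓ+1) (ℓ+2-1), Equiv.swap (ℓ+1-1) (ℓ+2)} : Set (Equiv.Perm ℤ)) = _
    rw [show (ℓ+2 : ℤ)-1 = ℓ+1 from by ring, show (ℓ+1 : ℤ)-1 = ℓ from by ring]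
  · simp

lemma Rset_mono_false :
    Rset false ((ℓ + 1 : ℤ), (ℓ + 2 : ℤ)) =
      {Equiv.swap (ℓ + 1) (ℓ + 2), Equiv.swap ℓ (ℓ + 1)} := by
  rw [Rset, if_neg]
  · show ({Equiv.swap (ℓ+1) (ℓ+2), Equiv.swap (ℓ+1-1) (ℓ+2-1)} : Set (Equiv.Perm ℤ)) = _
    rw [show (ℓ+2 : ℤ)-1 = ℓ+1 from by ring, show (ℓ+1 : ℤ)-1 = ℓ from by ring]
  · simp

lemma Rset_shm (lb : Bool) (p : ℤ × ℤ) :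
    Rset lb (shm ℓ p) =
      if lb = decide (p.1 < p.2) then
        {Equiv.swap (jmap ℓ p.1) (jmap ℓ p.2 - 1), Equiv.swap (jmap ℓ p.1 - 1) (jmap ℓ p.2)}
      else
        {Equiv.swap (jmap ℓ p.1) (jmap ℓ p.2), Equiv.swap (jmap ℓ p.1 - 1) (jmap ℓ p.2 - 1)} := by
  rw [Rset, show decide ((shm ℓ p).1 < (shm ℓ p).2) = decide (p.1 < p.2) from by
    simp [shm, jmap_lt_iff]]
  rfl

variable {s : {c // c ∈ C} → Bool} {b : Bool}

lemma Sb_val (c : {c // c ∈ Cplus ℓ C}) (h : ¬ (c.1 = (ℓ + 1, ℓ + 2))) :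
    Sb ℓ s b c = s ⟨shinv ℓ c.1, (mem_C_of c.2 h).1⟩ := dif_neg h

lemma fco_l : fco ℓ b ℓ = ℓ := by unfold fco; cases b <;> simp <;> omega
lemma fco_l2 : fco ℓ b (ℓ + 2) = ℓ := by unfold fco; cases b <;> simp <;> split_ifs <;> omega
lemma fco_false_l1 : fco ℓ false (ℓ + 1) = ℓ := by unfold fco; simp <;> omega

lemma collapse_gen {σ : Equiv.Perm ℤ} (hσ : σ ∈ SGen (Cplus ℓ C) (Sb ℓ s b)) (a : ℤ) :
    EqvGen (relOf (SGen C s)) (fco ℓ b a) (fco ℓ b (σ a)) := by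
  obtain ⟨c, hc⟩ := Set.mem_iUnion.mp hσ
  by_cases h : c.1 = (ℓ + 1, ℓ + 2)
  · rw [show Sb ℓ s b c = b from dif_pos h, h] at hc
    cases b with
    | true =>
        rw [Rset_mono_true] at hc
        rcases hc with rfl | rfl
        · exact eqvgen_swap_step (EqvGen.refl _) a
        · exact eqvgen_swap_step (by rw [fco_l, fco_l2]; exact EqvGen.refl _) a
    | false =>
        rw [Rset_mono_false] at hc
        rcases hc with rfl | rfl
        · exact eqvgen_swap_step (by rw [fco_false_l1, fco_l2]; exact EqvGen.refl _) a
        · exact eqvgen_swap_step (by rw [fco_false_l1, fco_l]; exact EqvGen.refl _) a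
  · obtain ⟨p, hp, hpe⟩ := Finset.mem_image.mp ((Finset.mem_insert.mp c.2).resolve_left h)
    have hval : Sb ℓ s b c = s ⟨p, hp⟩ := by
      rw [Sb_val c h]
      congr 1
      exact Subtype.ext (show shinv ℓ c.1 = p by rw [← hpe, shinv_shm])
    rw [hval, ← hpe, Rset_shm] at hc
    set lb := s ⟨p, hp⟩ with hlb
    by_cases hlt : lb = decide (p.1 < p.2)
    · rw [if_pos hlt] at hc
      rcases hc with rfl | rfl
      · refine eqvgen_swap_step ?_ a
        rw [fco_jmap, fco_jmap_sub_one]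
        exact EqvGen.rel _ _ ⟨Equiv.swap p.1 (p.2 - 1),
          mem_SS ⟨p, hp⟩ (by rw [Rset, if_pos hlt]; exact Set.mem_insert _ _),
          Equiv.swap_apply_left _ _⟩
      · refine eqvgen_swap_step ?_ a
        rw [fco_jmap, fco_jmap_sub_one]
        exact EqvGen.rel _ _ ⟨Equiv.swap (p.1 - 1) p.2,
          mem_SS ⟨p, hp⟩ (by rw [Rset, if_pos hlt]; exact Or.inr rfl),
          Equiv.swap_apply_left _ _⟩
    · rw [if_neg hlt] at hc
      rcases hc with rfl | rfl
      · refine eqvgen_swap_step ?_ a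
        rw [fco_jmap, fco_jmap]
        exact EqvGen.rel _ _ ⟨Equiv.swap p.1 p.2,
          mem_SS ⟨p, hp⟩ (by rw [Rset, if_neg hlt]; exact Set.mem_insert _ _),
          Equiv.swap_apply_left _ _⟩
      · refine eqvgen_swap_step ?_ a
        rw [fco_jmap_sub_one, fco_jmap_sub_one]
        exact EqvGen.rel _ _ ⟨Equiv.swap (p.1 - 1) (p.2 - 1),
          mem_SS ⟨p, hp⟩ (by rw [Rset, if_neg hlt]; exact Or.inr rfl),
          Equiv.swap_apply_left _ _⟩

lemma collapse {x y : ℤ} (h : EqvGen (relOf (SGen (Cplus ℓ C) (Sb ℓ s b))) x y) :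
    EqvGen (relOf (SGen C s)) (fco ℓ b x) (fco ℓ b y) := by
  induction h with
  | rel x y hxy => obtain ⟨σ, hσ, rfl⟩ := hxy; exact collapse_gen hσ x
  | refl x => exact EqvGen.refl _
  | symm x y _ ih => exact ih.symm _ _
  | trans x y z _ _ ih1 ih2 => exact ih1.trans _ _ _ ih2

lemma glueL : EqvGen (relOf (SGen (Cplus ℓ C) (Sb ℓ s b))) ℓ (ℓ + 2) := by
  cases b with
  | true =>
      refine EqvGen.rel _ _ ⟨Equiv.swap ℓ (ℓ + 2), ?_, Equiv.swap_apply_left _ _⟩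
      refine mem_SS ⟨(ℓ + 1, ℓ + 2), monogon_mem⟩ ?_
      rw [Sb_monogon, Rset_mono_true]
      exact Or.inr rfl
  | false =>
      have h1 : EqvGen (relOf (SGen (Cplus ℓ C) (Sb ℓ s false))) ℓ (ℓ + 1) := by
        refine EqvGen.rel _ _ ⟨Equiv.swap ℓ (ℓ + 1), ?_, Equiv.swap_apply_left _ _⟩
        refine mem_SS ⟨(ℓ + 1, ℓ + 2), monogon_mem⟩ ?_
        rw [Sb_monogon, Rset_mono_false]
        exact Or.inr rfl
      have h2 : EqvGen (relOf (SGen (Cplus ℓ C) (Sb ℓ s false))) (ℓ + 1) (ℓ + 2) := by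
        refine EqvGen.rel _ _ ⟨Equiv.swap (ℓ + 1) (ℓ + 2), ?_, Equiv.swap_apply_left _ _⟩
        refine mem_SS ⟨(ℓ + 1, ℓ + 2), monogon_mem⟩ ?_
        rw [Sb_monogon, Rset_mono_false]
        exact Set.mem_insert _ _
      exact h1.trans _ _ _ h2

lemma bridge (x : ℤ) :
    EqvGen (relOf (SGen (Cplus ℓ C) (Sb ℓ s b))) (jmap ℓ (x - 1)) (jmap ℓ x - 1) := by
  by_cases hx : x = ℓ + 1
  · subst hx
    rw [show jmap ℓ (ℓ + 1 - 1) = ℓ from by unfold jmap; simp,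
        show jmap ℓ (ℓ + 1) - 1 = ℓ + 2 from by unfold jmap; split_ifs <;> omega]
    exact glueL
  · rw [show jmap ℓ (x - 1) = jmap ℓ x - 1 from by unfold jmap; split_ifs <;> omega]
    exact EqvGen.refl _

lemma expand_gen {σ : Equiv.Perm ℤ} (hσ : σ ∈ SGen C s) (a : ℤ) :
    EqvGen (relOf (SGen (Cplus ℓ C) (Sb ℓ s b))) (jmap ℓ a) (jmap ℓ (σ a)) := by
  obtain ⟨c, hc⟩ := Set.mem_iUnion.mp hσ
  rw [Rset] at hc
  have hmem' : ∀ τ, τ ∈ Rset (s c) (shm ℓ c.1) → τ ∈ SGen (Cplus ℓ C) (Sb ℓ s b) := by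
    intro τ hτ
    refine mem_SS ⟨shm ℓ c.1, shm_mem c.2⟩ ?_
    rwa [Sb_shm s b c.2]
  by_cases hlt : s c = decide (c.1.1 < c.1.2)
  · rw [if_pos hlt] at hc
    rcases hc with rfl | rfl
    · refine eqvgen_swap_step ?_ a
      refine EqvGen.trans _ _ _ (EqvGen.rel _ _ ⟨Equiv.swap (jmap ℓ c.1.1) (jmap ℓ c.1.2 - 1),
        hmem' _ (by rw [Rset_shm, if_pos hlt]; exact Set.mem_insert _ _),
        Equiv.swap_apply_left _ _⟩) ((bridge c.1.2).symm _ _)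
    · refine eqvgen_swap_step ?_ a
      refine EqvGen.trans _ _ _ (bridge c.1.1) (EqvGen.rel _ _
        ⟨Equiv.swap (jmap ℓ c.1.1 - 1) (jmap ℓ c.1.2),
        hmem' _ (by rw [Rset_shm, if_pos hlt]; exact Or.inr rfl),
        Equiv.swap_apply_left _ _⟩)
  · rw [if_neg hlt] at hc
    rcases hc with rfl | rfl
    · refine eqvgen_swap_step ?_ a
      exact EqvGen.rel _ _ ⟨Equiv.swap (jmap ℓ c.1.1) (jmap ℓ c.1.2),
        hmem' _ (by rw [Rset_shm, if_neg hlt]; exact Set.mem_insert _ _),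
        Equiv.swap_apply_left _ _⟩
    · refine eqvgen_swap_step ?_ a
      refine EqvGen.trans _ _ _ (bridge c.1.1) (EqvGen.trans _ _ _ (EqvGen.rel _ _
        ⟨Equiv.swap (jmap ℓ c.1.1 - 1) (jmap ℓ c.1.2 - 1),
        hmem' _ (by rw [Rset_shm, if_neg hlt]; exact Or.inr rfl),
        Equiv.swap_apply_left _ _⟩) ((bridge c.1.2).symm _ _))

lemma expand {x y : ℤ} (h : EqvGen (relOf (SGen C s)) x y) :
    EqvGen (relOf (SGen (Cplus ℓ C) (Sb ℓ s b))) (jmap ℓ x) (jmap ℓ y) := by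
  induction h with
  | rel x y hxy => obtain ⟨σ, hσ, rfl⟩ := hxy; exact expand_gen hσ x
  | refl x => exact EqvGen.refl _
  | symm x y _ ih => exact ih.symm _ _
  | trans x y z _ _ ih1 ih2 => exact ih1.trans _ _ _ ih2

lemma main_iff (x y : ℤ) :
    EqvGen (relOf (SGen C s)) x y ↔
      EqvGen (relOf (SGen (Cplus ℓ C) (Sb ℓ s b))) (jmap ℓ x) (jmap ℓ y) := by
  constructor
  · exact expand
  · intro h
    have := collapse h
    rwa [fco_jmap, fco_jmap] at this

lemma fixed_gen {σ : Equiv.Perm ℤ} (hσ : σ ∈ SGen (Cplus ℓ C) (Sb ℓ s true)) :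
    σ (ℓ + 1) = ℓ + 1 := by
  obtain ⟨c, hc⟩ := Set.mem_iUnion.mp hσ
  by_cases h : c.1 = (ℓ + 1, ℓ + 2)
  · rw [show Sb ℓ s true c = true from dif_pos h, h, Rset_mono_true] at hc
    rcases hc with rfl | rfl
    · exact Equiv.swap_apply_left _ _
    · exact Equiv.swap_apply_of_ne_of_ne (by omega) (by omega)
  · obtain ⟨p, hp, hpe⟩ := Finset.mem_image.mp ((Finset.mem_insert.mp c.2).resolve_left h)
    have hval : Sb ℓ s true c = s ⟨p, hp⟩ := by
      rw [Sb_val c h]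
      congr 1
      exact Subtype.ext (show shinv ℓ c.1 = p by rw [← hpe, shinv_shm])
    rw [hval, ← hpe, Rset_shm] at hc
    split_ifs at hc <;> rcases hc with rfl | rfl <;>
      exact Equiv.swap_apply_of_ne_of_ne
        (by first | exact (jmap_ne1 _).symm | exact (jmap_sub_one_ne1 _).symm)
        (by first | exact (jmap_ne1 _).symm | exact (jmap_sub_one_ne1 _).symm)

lemma fixed_class {y : ℤ} (h : EqvGen (relOf (SGen (Cplus ℓ C) (Sb ℓ s true))) (ℓ + 1) y) :
    y = ℓ + 1 := by
  have key : ∀ x y, EqvGen (relOf (SGen (Cplus ℓ C) (Sb ℓ s true))) x y →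
      (x = ℓ + 1 ↔ y = ℓ + 1) := by
    intro x y h
    induction h with
    | rel x y hxy =>
        obtain ⟨σ, hσ, rfl⟩ := hxy
        constructor
        · rintro rfl; exact fixed_gen hσ
        · intro hy; exact σ.injective (by rw [hy, fixed_gen hσ])
    | refl x => exact Iff.rfl
    | symm x y _ ih => exact ih.symm
    | trans x y z _ _ ih1 ih2 => exact ih1.trans ih2
  exact (key _ _ h).mp rfl

end Main
lemma glue01 {ℓ : ℤ} {C : Finset (ℤ × ℤ)} {s : {c // c ∈ C} → Bool} :
    EqvGen (relOf (SGen (Cplus ℓ C) (Sb ℓ s false))) ℓ (ℓ + 1) := by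
  refine EqvGen.rel _ _ ⟨Equiv.swap ℓ (ℓ + 1), ?_, Equiv.swap_apply_left _ _⟩
  refine mem_SS ⟨(ℓ + 1, ℓ + 2), monogon_mem⟩ ?_
  rw [Sb_monogon, Rset_mono_false]
  exact Or.inr rfl

section GammaPart



lemma class_eq_iff {r : ℤ → ℤ → Prop} {x y : ℤ} :
    ({z | EqvGen r x z} = {z | EqvGen r y z}) ↔ EqvGen r x y := by
  constructor
  · intro h
    have hy : y ∈ {z | EqvGen r y z} := EqvGen.refl y
    rw [← h] at hy
    exact hy
  · intro h
    ext z
    exact ⟨fun hx => (h.symm _ _).trans _ _ _ hx, fun hy => h.trans _ _ _ hy⟩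

variable {ℓ : ℤ} {C : Finset (ℤ × ℤ)} {s : {c // c ∈ C} → Bool} {b : Bool} {d : ℕ}

lemma gamma_as_classes (d : ℕ) (C : Finset (ℤ × ℤ)) (s : {c // c ∈ C} → Bool) :
    Gamma d C s =
      ((fun x : ℤ => {y | EqvGen (relOf (SGen C s)) x y}) '' Set.Icc (0 : ℤ) (2 * d)).ncard := by
  unfold Gamma
  congr 1
  apply Set.image_congr'
  intro x
  exact orbit_closure_eq (SGen C s) x

lemma gamma_pos (d : ℕ) (C : Finset (ℤ × ℤ)) (s : {c // c ∈ C} → Bool) : 1 ≤ Gamma d C s := by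
  unfold Gamma
  rw [Nat.one_le_iff_ne_zero, ← Nat.pos_iff_ne_zero,
    Set.ncard_pos ((Set.finite_Icc _ _).image _)]
  exact (Set.nonempty_Icc.mpr (by positivity)).image _

lemma ncard_M :
    ((fun x : ℤ => {y | EqvGen (relOf (SGen (Cplus ℓ C) (Sb ℓ s b))) (jmap ℓ x) y}) ''
        Set.Icc (0 : ℤ) (2 * d)).ncard =
      ((fun x : ℤ => {y | EqvGen (relOf (SGen C s)) x y}) '' Set.Icc (0 : ℤ) (2 * d)).ncard := by
  have hpt : ∀ x : ℤ, {y | EqvGen (relOf (SGen C s)) x y} =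
      jmap ℓ ⁻¹' {y | EqvGen (relOf (SGen (Cplus ℓ C) (Sb ℓ s b))) (jmap ℓ x) y} := by
    intro x
    ext y
    simp only [Set.mem_setOf_eq, Set.mem_preimage]
    exact main_iff x y
  have himg : (fun x : ℤ => {y | EqvGen (relOf (SGen C s)) x y}) '' Set.Icc (0 : ℤ) (2 * d) =
      (fun T => jmap ℓ ⁻¹' T) ''
        ((fun x : ℤ => {y | EqvGen (relOf (SGen (Cplus ℓ C) (Sb ℓ s b))) (jmap ℓ x) y}) ''
          Set.Icc (0 : ℤ) (2 * d)) := by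
    rw [← Set.image_comp]
    exact Set.image_congr' hpt
  rw [himg]
  refine (Set.ncard_image_of_injOn ?_).symm
  rintro T1 ⟨x, hx, rfl⟩ T2 ⟨y, hy, rfl⟩ h
  beta_reduce at h ⊢
  rw [← hpt x, ← hpt y] at h
  exact class_eq_iff.mpr (expand (class_eq_iff.mp h))

lemma jmap_mem_Icc (hℓ0 : 0 ≤ ℓ) {x : ℤ} (hx : x ∈ Set.Icc (0 : ℤ) (2 * d)) :
    jmap ℓ x ∈ Set.Icc (0 : ℤ) (2 * ((d + 1 : ℕ) : ℤ)) := by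
  simp only [Set.mem_Icc] at hx ⊢
  push_cast
  unfold jmap
  split_ifs <;> omega

lemma gamma_false (hℓ0 : 0 ≤ ℓ) (hℓ : ℓ ≤ 2 * (d : ℤ)) :
    Gamma (d + 1) (Cplus ℓ C) (Sb ℓ s false) = Gamma d C s := by
  rw [gamma_as_classes, gamma_as_classes, ← ncard_M (ℓ := ℓ) (b := false) (s := s) (d := d)]
  congr 1
  ext T
  constructor
  · rintro ⟨p, hp, rfl⟩
    simp only [Set.mem_Icc] at hp
    push_cast at hp
    by_cases h1 : p ≤ ℓ
    · exact ⟨p, Set.mem_Icc.mpr ⟨hp.1, by omega⟩,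
        by beta_reduce; rw [show jmap ℓ p = p from by unfold jmap; rw [if_pos h1]]⟩
    by_cases h2 : p = ℓ + 1
    · subst h2
      refine ⟨ℓ, Set.mem_Icc.mpr ⟨hℓ0, hℓ⟩, ?_⟩
      beta_reduce
      rw [show jmap ℓ ℓ = ℓ from by unfold jmap; simp]
      exact class_eq_iff.mpr glue01
    by_cases h3 : p = ℓ + 2
    · subst h3
      refine ⟨ℓ, Set.mem_Icc.mpr ⟨hℓ0, hℓ⟩, ?_⟩
      beta_reduce
      rw [show jmap ℓ ℓ = ℓ from by unfold jmap; simp]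
      exact class_eq_iff.mpr glueL
    · refine ⟨p - 2, Set.mem_Icc.mpr ⟨by omega, by omega⟩, ?_⟩
      beta_reduce
      rw [show jmap ℓ (p - 2) = p from by unfold jmap; split_ifs <;> omega]
  · rintro ⟨x, hx, rfl⟩
    exact ⟨jmap ℓ x, jmap_mem_Icc hℓ0 hx, rfl⟩

lemma gamma_true (hℓ0 : 0 ≤ ℓ) (hℓ : ℓ ≤ 2 * (d : ℤ)) :
    Gamma (d + 1) (Cplus ℓ C) (Sb ℓ s true) = Gamma d C s + 1 := by
  rw [gamma_as_classes, gamma_as_classes, ← ncard_M (ℓ := ℓ) (b := true) (s := s) (d := d)]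
  have hset : (fun x : ℤ => {y | EqvGen (relOf (SGen (Cplus ℓ C) (Sb ℓ s true))) x y}) ''
        Set.Icc (0 : ℤ) (2 * ((d + 1 : ℕ) : ℤ)) =
      insert {y | EqvGen (relOf (SGen (Cplus ℓ C) (Sb ℓ s true))) (ℓ + 1) y}
        ((fun x : ℤ => {y | EqvGen (relOf (SGen (Cplus ℓ C) (Sb ℓ s true))) (jmap ℓ x) y}) ''
          Set.Icc (0 : ℤ) (2 * d)) := by
    ext T
    constructor
    · rintro ⟨p, hp, rfl⟩
      simp only [Set.mem_Icc] at hp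
      push_cast at hp
      by_cases h2 : p = ℓ + 1
      · subst h2; exact Set.mem_insert _ _
      refine Set.mem_insert_iff.mpr (Or.inr ?_)
      by_cases h1 : p ≤ ℓ
      · exact ⟨p, Set.mem_Icc.mpr ⟨hp.1, by omega⟩,
          by beta_reduce; rw [show jmap ℓ p = p from by unfold jmap; rw [if_pos h1]]⟩
      by_cases h3 : p = ℓ + 2
      · subst h3
        refine ⟨ℓ, Set.mem_Icc.mpr ⟨hℓ0, hℓ⟩, ?_⟩
        beta_reduce
        rw [show jmap ℓ ℓ = ℓ from by unfold jmap; simp]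
        exact class_eq_iff.mpr glueL
      · refine ⟨p - 2, Set.mem_Icc.mpr ⟨by omega, by omega⟩, ?_⟩
        beta_reduce
        rw [show jmap ℓ (p - 2) = p from by unfold jmap; split_ifs <;> omega]
    · rintro (rfl | ⟨x, hx, rfl⟩)
      · exact ⟨ℓ + 1, Set.mem_Icc.mpr ⟨by omega, by push_cast; omega⟩, rfl⟩
      · exact ⟨jmap ℓ x, jmap_mem_Icc hℓ0 hx, rfl⟩
  rw [hset]
  rw [Set.ncard_insert_of_notMem ?hnot ((Set.finite_Icc _ _).image _)]
  case hnot =>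
    rintro ⟨x, hx, hEq⟩
    have h1 := class_eq_iff.mp hEq
    have h2 := fixed_class (h1.symm _ _)
    exact jmap_ne1 x h2
end GammaPart


section Assembly

variable {ℓ : ℤ} {C : Finset (ℤ × ℤ)} {d : ℕ}

lemma card_filter_Sb (s : {c // c ∈ C} → Bool) (b t : Bool) :
    (Finset.univ.filter fun c => Sb ℓ s b c = t).card
      = (if b = t then 1 else 0) + (Finset.univ.filter fun c => s c = t).card := by
  rw [Finset.card_filter, Finset.card_filter]
  rw [Fintype.sum_equiv (chordEquiv ℓ C)
    (fun c => if Sb ℓ s b c = t then 1 else 0)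
    (fun o => if Sb ℓ s b ((chordEquiv ℓ C).symm o) = t then 1 else 0)
    (fun c => by beta_reduce; rw [Equiv.symm_apply_apply])]
  rw [Fintype.sum_option]
  congr 1
  · rw [Sb_symm_none]
  · exact Finset.sum_congr rfl fun c _ => by rw [Sb_symm_some]

lemma Sb_bijective :
    Function.Bijective (fun sb : ({c // c ∈ C} → Bool) × Bool => Sb ℓ sb.1 sb.2) := by
  constructor
  · rintro ⟨s1, b1⟩ ⟨s2, b2⟩ h
    have hb : b1 = b2 := by
      have h1 := congrFun h ⟨(ℓ + 1, ℓ + 2), monogon_mem⟩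
      beta_reduce at h1
      rwa [Sb_monogon, Sb_monogon] at h1
    have hs : s1 = s2 := by
      funext c
      have h1 := congrFun h ⟨shm ℓ c.1, shm_mem c.2⟩
      beta_reduce at h1
      rwa [Sb_shm s1 b1 c.2, Sb_shm s2 b2 c.2] at h1
    rw [hb, hs]
  · intro s'
    refine ⟨⟨fun c => s' ⟨shm ℓ c.1, shm_mem c.2⟩, s' ⟨(ℓ + 1, ℓ + 2), monogon_mem⟩⟩, ?_⟩
    funext c
    by_cases h : c.1 = (ℓ + 1, ℓ + 2)
    · beta_reduce
      rw [Sb, dif_pos h]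
      exact congrArg s' (Subtype.ext h.symm)
    · beta_reduce
      rw [Sb, dif_neg h]
      exact congrArg s' (Subtype.ext (mem_C_of c.2 h).2)

lemma alg (k : ℤ) (m : ℕ) :
    (T (k + 1) : LaurentPolynomial ℤ) * (-T 2 - T (-2)) ^ (m + 1)
        + T (k - 1) * (-T 2 - T (-2)) ^ m
      = -T 3 * (T k * (-T 2 - T (-2)) ^ m) := by
  have e1 : (T (k + 1) : LaurentPolynomial ℤ) * T 2 = T (k + 3) := by
    rw [← T_add, show k + 1 + 2 = k + 3 from by ring]
  have e2 : (T (k + 1) : LaurentPolynomial ℤ) * T (-2) = T (k - 1) := by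
    rw [← T_add, show k + 1 + -2 = k - 1 from by ring]
  have e3 : (T 3 : LaurentPolynomial ℤ) * T k = T (k + 3) := by
    rw [← T_add, add_comm]
  have key : (T (k + 1) : LaurentPolynomial ℤ) * (-T 2 - T (-2)) + T (k - 1) = -T 3 * T k := by
    have expand : (T (k + 1) : LaurentPolynomial ℤ) * (-T 2 - T (-2))
        = -(T (k + 1) * T 2) - T (k + 1) * T (-2) := by ring
    rw [expand, e1, e2, ← e3]; ring
  calc (T (k + 1) : LaurentPolynomial ℤ) * (-T 2 - T (-2)) ^ (m + 1)
        + T (k - 1) * (-T 2 - T (-2)) ^ m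
      = (T (k + 1) * (-T 2 - T (-2)) + T (k - 1)) * (-T 2 - T (-2)) ^ m := by
        rw [pow_succ]; ring
    _ = -T 3 * (T k * (-T 2 - T (-2)) ^ m) := by rw [key]; ring

lemma term_sum (hℓ0 : 0 ≤ ℓ) (hℓ : ℓ ≤ 2 * (d : ℤ)) (s : {c // c ∈ C} → Bool) :
    bracketTerm (d + 1) (Cplus ℓ C) (Sb ℓ s true)
      + bracketTerm (d + 1) (Cplus ℓ C) (Sb ℓ s false)
      = -T 3 * bracketTerm d C s := by
  unfold bracketTerm
  rw [card_filter_Sb s true true, card_filter_Sb s true false,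
      card_filter_Sb s false true, card_filter_Sb s false false,
      gamma_true hℓ0 hℓ, gamma_false hℓ0 hℓ]
  obtain ⟨m, hm⟩ : ∃ m, Gamma d C s = m + 1 :=
    ⟨Gamma d C s - 1, (Nat.succ_pred_eq_of_pos (gamma_pos d C s)).symm⟩
  rw [hm]
  simp only [if_pos rfl, if_neg (by decide : ¬(true = false)),
    if_neg (by decide : ¬(false = true)), Nat.add_sub_cancel]
  push_cast
  rw [show ((1 : ℤ) + (Finset.univ.filter fun c => s c = true).card
        - (0 + (Finset.univ.filter fun c => s c = false).card))
      = (((Finset.univ.filter fun c => s c = true).card : ℤ)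
        - (Finset.univ.filter fun c => s c = false).card) + 1 from by ring,
     show ((0 : ℤ) + (Finset.univ.filter fun c => s c = true).card
        - (1 + (Finset.univ.filter fun c => s c = false).card))
      = (((Finset.univ.filter fun c => s c = true).card : ℤ)
        - (Finset.univ.filter fun c => s c = false).card) - 1 from by ring]
  exact alg _ m

lemma bracket_Cplus (hℓ0 : 0 ≤ ℓ) (hℓ : ℓ ≤ 2 * (d : ℤ)) :
    bracket (d + 1) (Cplus ℓ C) = -T 3 * bracket d C := by
  rw [bracket, bracket, Finset.mul_sum]
  rw [← Fintype.sum_bijective _ Sb_bijective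
    (fun sb : ({c // c ∈ C} → Bool) × Bool => bracketTerm (d + 1) (Cplus ℓ C) (Sb ℓ sb.1 sb.2))
    (fun s' => bracketTerm (d + 1) (Cplus ℓ C) s') (fun sb => rfl)]
  rw [Fintype.sum_prod_type]
  refine Finset.sum_congr rfl fun s _ => ?_
  rw [Fintype.sum_bool]
  exact term_sum hℓ0 hℓ s

end Assembly


open LaurentPolynomial in
/-- birth of a positive monogon: `⟨C₊^ℓ⟩ = (-A³)·⟨C⟩`, where `C₊^ℓ` is obtained
from `C` by replacing each entry `i` by `i` if `i ≤ ℓ` and by `i + 2` if `i > ℓ`, and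
adjoining the positive chord `(ℓ+1, ℓ+2)`. -/
theorem bracket_monogon_pos (d : ℕ) (C : Finset (ℤ × ℤ)) (hC : IsOLCD d C)
    (ℓ : ℤ) (hℓ0 : 0 ≤ ℓ) (hℓ : ℓ ≤ 2 * d) :
    bracket (d + 1)
      (insert (ℓ + 1, ℓ + 2)
        (C.image fun p => ((if p.1 ≤ ℓ then p.1 else p.1 + 2),
                           (if p.2 ≤ ℓ then p.2 else p.2 + 2)))) =
      (-T 3) * bracket d C := by
  show bracket (d + 1) (Cplus ℓ C) = -T 3 * bracket d C
  exact bracket_Cplus hℓ0 hℓ
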